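/- Each of the 240 octonions consisting of the 112 elements ±e_t ± e_u for distinct t, u ∈ {∞, 0, 1, …, 6} (i.e. distinct indices from the basis {1 = e₀, e₁, …, e₇}) and the 128 elements ½(±1 ± e₁ ± e₂ ± e₃ ± e₄ ± e₅ ± e₆ ± e₇) with an odd number of minus signs has norm η equal to 2; moreover the ℤ-span L of these 240 octonions is a free ℤ-module of rank 8 inside 𝕆 on which the norm η takes even non-negative integer values. -/

import Mathlib

/-!
Octonions 𝕆: 8-dimensional real composition division algebra with orthonormal
basis {e₀ = 1, e₁, …, e₇}, multiplication determined by e₁e₂ = e₄ together with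
its images under the index maps e_t ↦ e_{t+1} and e_t ↦ e_{2t}, conjugation
x ↦ x̄, and norm η(x) = x x̄.
-/

noncomputable section

namespace LeechPaper

/-- The octonions, as 8-tuples of real coordinates over the basis
`{e₀ = 1, e₁, …, e₇}`. -/
structure Oct where
  c : Fin 8 → ℝ

namespace Oct

def equivFun : Oct ≃ (Fin 8 → ℝ) where
  toFun := Oct.c
  invFun := Oct.mk
  left_inv _ := rfl
  right_inv _ := rfl

instance : AddCommGroup Oct := equivFun.addCommGroup

instance : SMul ℝ Oct := ⟨fun r x => ⟨fun k => r * x.c k⟩⟩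

/-- The basis octonions `e t`, `t ∈ PL(7) = {∞} ∪ 𝔽₇` (labelled here by `Fin 8`,
with `e 0 = 1` the real unit and `e 1, …, e 7` the imaginary units). -/
def e (t : Fin 8) : Oct := ⟨fun k => if k = t then 1 else 0⟩

instance : One Oct := ⟨e 0⟩

/-- Index part of the structure constants: `e i * e j = ± e (octIdxTbl i j)`.
The table encodes `e₁e₂ = e₄` together with all its images under the index maps
`e_t ↦ e_{t+1}` and `e_t ↦ e_{2t}` (imaginary indices taken mod 7), i.e. the
Fano lines `(1,2,4), (2,3,5), (3,4,6), (4,5,7), (5,6,1), (6,7,2), (7,1,3)`. -/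
def octIdxTbl : Matrix (Fin 8) (Fin 8) (Fin 8) :=
  !![0, 1, 2, 3, 4, 5, 6, 7;
     1, 0, 4, 7, 2, 6, 5, 3;
     2, 4, 0, 5, 1, 3, 7, 6;
     3, 7, 5, 0, 6, 2, 4, 1;
     4, 2, 1, 6, 0, 7, 3, 5;
     5, 6, 3, 2, 7, 0, 1, 4;
     6, 5, 7, 4, 3, 1, 0, 2;
     7, 3, 6, 1, 5, 4, 2, 0]

/-- Sign part of the structure constants: `e i * e j = octSgnTbl i j • e (octIdxTbl i j)`. -/
def octSgnTbl : Matrix (Fin 8) (Fin 8) ℝ :=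
  !![1, 1, 1, 1, 1, 1, 1, 1;
     1, -1, 1, 1, -1, 1, -1, -1;
     1, -1, -1, 1, 1, -1, 1, -1;
     1, -1, -1, -1, 1, 1, -1, 1;
     1, 1, -1, -1, -1, 1, 1, -1;
     1, -1, 1, -1, -1, -1, 1, 1;
     1, 1, -1, 1, -1, -1, -1, 1;
     1, 1, 1, -1, 1, -1, -1, -1]

/-- Octonion multiplication, bilinear with structure constants given by the tables. -/
instance : Mul Oct :=
  ⟨fun x y => ⟨fun k => ∑ i : Fin 8, ∑ j : Fin 8,
    (if octIdxTbl i j = k then octSgnTbl i j else 0) * x.c i * y.c j⟩⟩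

/-- Octonion conjugation `x ↦ x̄` (negate the imaginary coordinates). -/
def conj (x : Oct) : Oct := ⟨fun k => if k = 0 then x.c 0 else -x.c k⟩

/-- The real part of an octonion. -/
def re (x : Oct) : ℝ := x.c 0

/-- The norm `η(x) = x x̄` (which is a real octonion; we record its real value). -/
def eta (x : Oct) : ℝ := re (x * conj x)

end Oct

open Oct

/-- The norm `N(x,y,z) = ½(x x̄ + y ȳ + z z̄)` on `𝕆³`. -/
def N (x y z : Oct) : ℝ := (eta x + eta y + eta z) / 2

/-- The conjugate transpose of a `3 × 3` octonionic matrix. -/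
def ctrans (M : Matrix (Fin 3) (Fin 3) Oct) : Matrix (Fin 3) (Fin 3) Oct :=
  fun i j => conj (M j i)

/-- The matrix `V = v̄ vᵀ ∈ J₃^𝕆` with `(i,j)` entry `v̄ᵢ vⱼ`, for `v ∈ 𝕆³`. -/
def jmat (v : Fin 3 → Oct) : Matrix (Fin 3) (Fin 3) Oct :=
  fun i j => conj (v i) * v j

/-- The (real) trace of a Hermitian `3 × 3` octonionic matrix. -/
def rtr (J : Matrix (Fin 3) (Fin 3) Oct) : ℝ :=
  re (J 0 0) + re (J 1 1) + re (J 2 2)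

/-- The cubic norm (determinant) of a Hermitian `3 × 3` octonionic matrix
`J = [[r₁, A₁, Ā₂],[Ā₁, r₂, A₃],[A₂, Ā₃, r₃]]`:
`det J = r₁r₂r₃ − r₁ η(A₃) − r₂ η(A₂) − r₃ η(A₁) + 2 Re((A₁A₃)A₂)`. -/
def jdet (J : Matrix (Fin 3) (Fin 3) Oct) : ℝ :=
  re (J 0 0) * re (J 1 1) * re (J 2 2)
    - re (J 0 0) * eta (J 1 2) - re (J 1 1) * eta (J 2 0) - re (J 2 2) * eta (J 0 1)
    + 2 * re ((J 0 1 * J 1 2) * J 2 0)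

/-- The quadratic adjoint `J♮ = J² − tr(J)·J + ½(tr(J)² − tr(J²))·I` of a Hermitian
`3 × 3` octonionic matrix. -/
def jadj (J : Matrix (Fin 3) (Fin 3) Oct) : Matrix (Fin 3) (Fin 3) Oct :=
  J * J - rtr J • J + (((rtr J) ^ 2 - rtr (J * J)) / 2) • (1 : Matrix (Fin 3) (Fin 3) Oct)

/-- The 240 root octonions: the 112 octonions `±e_t ± e_u` for distinct
`t, u ∈ PL(7)` together with the 128 octonions `½(±1 ± e₁ ± ⋯ ± e₇)` having an
odd number of minus signs. Their ℤ-span `L` is a scaled copy of the E₈ lattice. -/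
def Roots : Set Oct :=
  {x | ∃ t u : Fin 8, t ≠ u ∧ ∃ a b : ℝ, (a = 1 ∨ a = -1) ∧ (b = 1 ∨ b = -1) ∧
        x = a • e t + b • e u} ∪
  {x | ∃ ε : Fin 8 → ℝ, (∀ i, ε i = 1 ∨ ε i = -1) ∧
        Odd (Finset.univ.filter fun i => ε i = -1).card ∧
        x = (1/2 : ℝ) • ∑ i : Fin 8, ε i • e i}

/-- The lattice `L`, a scaled copy of the E₈ root lattice inside 𝕆. -/
def L : Submodule ℤ Oct := Submodule.span ℤ Roots

end LeechPaper

end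

namespace LeechPaper
namespace Oct

@[ext] lemma oct_ext {x y : Oct} (h : ∀ k, x.c k = y.c k) : x = y := by
  cases x; cases y; simp only [mk.injEq]; exact funext h

lemma c_add (x y : Oct) (k : Fin 8) : (x + y).c k = x.c k + y.c k := rfl
lemma c_sub (x y : Oct) (k : Fin 8) : (x - y).c k = x.c k - y.c k := rfl
lemma c_neg (x : Oct) (k : Fin 8) : (-x).c k = -x.c k := rfl
lemma c_zero (k : Fin 8) : (0 : Oct).c k = 0 := rfl
lemma c_rsmul (r : ℝ) (x : Oct) (k : Fin 8) : (r • x).c k = r * x.c k := rfl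
lemma c_zsmul (n : ℤ) (x : Oct) (k : Fin 8) : (n • x).c k = (n : ℝ) * x.c k := by
  rw [show (n • x).c k = n • (x.c k) from rfl, zsmul_eq_mul]
lemma c_e (t k : Fin 8) : (e t).c k = if k = t then 1 else 0 := rfl

/-- coordinate additive hom -/
def coord (k : Fin 8) : Oct →+ ℝ where
  toFun x := x.c k
  map_zero' := rfl
  map_add' _ _ := rfl

lemma c_sum {ι : Type*} (s : Finset ι) (f : ι → Oct) (k : Fin 8) :
    (∑ i ∈ s, f i).c k = ∑ i ∈ s, (f i).c k := map_sum (coord k) f s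

lemma idx_diag : ∀ i j : Fin 8, octIdxTbl i j = 0 ↔ j = i := by
  intro i j; fin_cases i <;> fin_cases j <;> decide

lemma sgn_diag : ∀ i : Fin 8, octSgnTbl i i = if i = 0 then (1:ℝ) else -1 := by
  intro i; fin_cases i <;> rfl

lemma eta_eq (x : Oct) : eta x = ∑ k : Fin 8, x.c k ^ 2 := by
  have h : eta x = ∑ i : Fin 8, ∑ j : Fin 8,
      (if octIdxTbl i j = 0 then octSgnTbl i j else 0) * x.c i * (conj x).c j := rfl
  rw [h]
  simp only [idx_diag, ite_mul, zero_mul, Finset.sum_ite_eq', Finset.mem_univ, if_true]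
  refine Finset.sum_congr rfl fun i _ => ?_
  rw [sgn_diag]
  show _ * _ * (if i = 0 then x.c 0 else -x.c i) = _
  split_ifs with hi
  · subst hi; ring
  · ring

lemma eta_root1 {t u : Fin 8} (htu : t ≠ u) {a b : ℝ}
    (ha : a = 1 ∨ a = -1) (hb : b = 1 ∨ b = -1) : eta (a • e t + b • e u) = 2 := by
  have ha2 : a ^ 2 = 1 := by rcases ha with h | h <;> rw [h] <;> norm_num
  have hb2 : b ^ 2 = 1 := by rcases hb with h | h <;> rw [h] <;> norm_num
  rw [eta_eq]
  have : ∀ k : Fin 8, (a • e t + b • e u).c k ^ 2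
      = (if k = t then a ^ 2 else 0) + (if k = u then b ^ 2 else 0) := by
    intro k
    rw [c_add, c_rsmul, c_rsmul, c_e, c_e]
    split_ifs with h1 h2 h2
    · exact absurd (h1 ▸ h2 ▸ rfl : t = u) htu
    all_goals ring
  rw [Finset.sum_congr rfl fun k _ => this k, Finset.sum_add_distrib]
  simp [Finset.sum_ite_eq', ha2, hb2]
  norm_num

lemma eta_root2 (ε : Fin 8 → ℝ) (hε : ∀ i, ε i = 1 ∨ ε i = -1) :
    eta ((1/2 : ℝ) • ∑ i : Fin 8, ε i • e i) = 2 := by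
  rw [eta_eq]
  have hc : ∀ k : Fin 8, ((1/2 : ℝ) • ∑ i : Fin 8, ε i • e i).c k = ε k / 2 := by
    intro k
    rw [c_rsmul, c_sum]
    simp only [c_rsmul, c_e, mul_ite, mul_one, mul_zero]
    rw [Finset.sum_ite_eq]
    simp; ring
  have : ∀ k : Fin 8, ((1/2 : ℝ) • ∑ i : Fin 8, ε i • e i).c k ^ 2 = 1/4 := by
    intro k; rw [hc]; rcases hε k with h | h <;> rw [h] <;> norm_num
  rw [Finset.sum_congr rfl fun k _ => this k]
  simp [Finset.sum_const]
  norm_num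

end Oct
end LeechPaper
namespace LeechPaper
namespace Oct

/-- the glue vector `g = ½(1,1,1,1,1,1,1,-1)`. -/
noncomputable def gv : Oct := (1/2 : ℝ) • ∑ i : Fin 8, (if i = (7 : Fin 8) then (-1:ℝ) else 1) • e i

noncomputable def v : Fin 8 → Oct :=
  ![gv, e 0 + e 1, e 1 - e 0, e 2 - e 0, e 3 - e 0, e 4 - e 0, e 5 - e 0, e 6 - e 0]

lemma v0 : v 0 = gv := rfl
lemma v1 : v 1 = e 0 + e 1 := rfl
lemma v2 : v 2 = e 1 - e 0 := rfl
lemma v3 : v 3 = e 2 - e 0 := rfl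
lemma v4 : v 4 = e 3 - e 0 := rfl
lemma v5 : v 5 = e 4 - e 0 := rfl
lemma v6 : v 6 = e 5 - e 0 := rfl
lemma v7 : v 7 = e 6 - e 0 := rfl

lemma c_gv (k : Fin 8) : gv.c k = if k = 7 then -(1/2 : ℝ) else 1/2 := by
  show (1/2 : ℝ) * (∑ i : Fin 8, (if i = (7 : Fin 8) then (-1:ℝ) else 1) • e i).c k = _
  rw [c_sum]
  simp only [c_rsmul, c_e, mul_ite, mul_one, mul_zero]
  rw [Finset.sum_ite_eq]
  simp only [Finset.mem_univ, if_true]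
  split_ifs <;> norm_num

lemma v_mem_roots : ∀ i, v i ∈ Roots := by
  intro i
  fin_cases i
  · right
    refine ⟨fun i => if i = (7 : Fin 8) then (-1:ℝ) else 1, fun i => ?_, ?_, rfl⟩
    · simp only []
      split_ifs
      · right; rfl
      · left; rfl
    · have : (Finset.univ.filter fun i : Fin 8 =>
          (if i = (7 : Fin 8) then (-1:ℝ) else 1) = -1) = {7} := by
        ext i
        simp only [Finset.mem_filter, Finset.mem_univ, true_and, Finset.mem_singleton]
        split_ifs with h
        · simp [h]
        · simp [h]; norm_num
      rw [this]
      simp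
  · exact Or.inl ⟨0, 1, by decide, 1, 1, Or.inl rfl, Or.inl rfl, by
      ext k; show (e 0).c k + (e 1).c k = ((1:ℝ) • e 0 + (1:ℝ) • e 1).c k
      rw [c_add, c_rsmul, c_rsmul]; ring⟩
  · exact Or.inl ⟨1, 0, by decide, 1, -1, Or.inl rfl, Or.inr rfl, by
      ext k; show (e 1).c k - (e 0).c k = ((1:ℝ) • e 1 + (-1:ℝ) • e 0).c k
      rw [c_add, c_rsmul, c_rsmul]; ring⟩
  · exact Or.inl ⟨2, 0, by decide, 1, -1, Or.inl rfl, Or.inr rfl, by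
      ext k; show (e 2).c k - (e 0).c k = ((1:ℝ) • e 2 + (-1:ℝ) • e 0).c k
      rw [c_add, c_rsmul, c_rsmul]; ring⟩
  · exact Or.inl ⟨3, 0, by decide, 1, -1, Or.inl rfl, Or.inr rfl, by
      ext k; show (e 3).c k - (e 0).c k = ((1:ℝ) • e 3 + (-1:ℝ) • e 0).c k
      rw [c_add, c_rsmul, c_rsmul]; ring⟩
  · exact Or.inl ⟨4, 0, by decide, 1, -1, Or.inl rfl, Or.inr rfl, by
      ext k; show (e 4).c k - (e 0).c k = ((1:ℝ) • e 4 + (-1:ℝ) • e 0).c k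
      rw [c_add, c_rsmul, c_rsmul]; ring⟩
  · exact Or.inl ⟨5, 0, by decide, 1, -1, Or.inl rfl, Or.inr rfl, by
      ext k; show (e 5).c k - (e 0).c k = ((1:ℝ) • e 5 + (-1:ℝ) • e 0).c k
      rw [c_add, c_rsmul, c_rsmul]; ring⟩
  · exact Or.inl ⟨6, 0, by decide, 1, -1, Or.inl rfl, Or.inr rfl, by
      ext k; show (e 6).c k - (e 0).c k = ((1:ℝ) • e 6 + (-1:ℝ) • e 0).c k
      rw [c_add, c_rsmul, c_rsmul]; ring⟩

end Oct
end LeechPaper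
namespace LeechPaper
namespace Oct

lemma c_intsum (m : Fin 8 → ℤ) (k : Fin 8) :
    (∑ i : Fin 8, m i • e i).c k = (m k : ℝ) := by
  rw [c_sum]
  simp only [c_zsmul, c_e, mul_ite, mul_one, mul_zero]
  rw [Finset.sum_ite_eq]
  simp

lemma evensum_mem (m : Fin 8 → ℤ) (hm : Even (∑ i : Fin 8, m i)) :
    (∑ i : Fin 8, m i • e i) ∈ Submodule.span ℤ (Set.range v) := by
  obtain ⟨s, hs⟩ := hm
  have hmem : (-(2 * m 7)) • v 0 + (s + 3 * m 7) • v 1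
      + (m 1 + m 7 - (s + 3 * m 7)) • v 2 + (m 2 + m 7) • v 3 + (m 3 + m 7) • v 4
      + (m 4 + m 7) • v 5 + (m 5 + m 7) • v 6 + (m 6 + m 7) • v 7
      ∈ Submodule.span ℤ (Set.range v) := by
    repeat
      first
      | exact Submodule.smul_mem _ _ (Submodule.subset_span ⟨_, rfl⟩)
      | apply Submodule.add_mem
  have heq : (∑ i : Fin 8, m i • e i) = (-(2 * m 7)) • v 0 + (s + 3 * m 7) • v 1
      + (m 1 + m 7 - (s + 3 * m 7)) • v 2 + (m 2 + m 7) • v 3 + (m 3 + m 7) • v 4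
      + (m 4 + m 7) • v 5 + (m 5 + m 7) • v 6 + (m 6 + m 7) • v 7 := by
    have hs' : ((m 0 : ℝ) + m 1 + m 2 + m 3 + m 4 + m 5 + m 6 + m 7) = 2 * s := by
      have : ((∑ i : Fin 8, m i : ℤ) : ℝ) = ((s + s : ℤ) : ℝ) := by rw [hs]
      rw [Fin.sum_univ_eight] at this
      push_cast at this
      linarith
    ext k
    rw [c_intsum]
    simp only [c_add, c_zsmul, v0, v1, v2, v3, v4, v5, v6, v7, c_gv, c_sub, c_e]
    fin_cases k <;> simp <;> (try push_cast) <;> linarith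
  rw [heq]; exact hmem

lemma pair_mem (t u : Fin 8) (α β : ℤ) (hev : Even (α + β)) :
    (α • e t + β • e u) ∈ Submodule.span ℤ (Set.range v) := by
  have heq : α • e t + β • e u
      = ∑ i : Fin 8, ((if i = t then α else 0) + (if i = u then β else 0)) • e i := by
    have h1 : ∀ (w : Fin 8) (γ : ℤ), (∑ i : Fin 8, (if i = w then γ else 0) • e i) = γ • e w := by
      intro w γ
      have hpt : ∀ i : Fin 8, (if i = w then γ else 0) • e i = if i = w then γ • e i else 0 := by
        intro i; split_ifs <;> simp
      rw [Finset.sum_congr rfl fun i _ => hpt i, Finset.sum_ite_eq']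
      simp
    rw [Finset.sum_congr rfl fun i _ => add_smul _ _ _, Finset.sum_add_distrib, h1, h1]
  rw [heq]
  apply evensum_mem
  have : ∀ (w : Fin 8) (γ : ℤ), (∑ i : Fin 8, if i = w then γ else 0) = γ := by
    intro w γ; simp [Finset.sum_ite_eq']
  rw [Finset.sum_add_distrib, this, this]
  exact hev

lemma roots_sub_span : Roots ⊆ (Submodule.span ℤ (Set.range v) : Set Oct) := by
  rintro x (⟨t, u, htu, a, b, ha, hb, rfl⟩ | ⟨ε, hε, hodd, rfl⟩)
  · have key : ∀ (α β : ℤ), (α = 1 ∨ α = -1) → (β = 1 ∨ β = -1) → a = (α : ℝ) → b = (β : ℝ) →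
        (a • e t + b • e u) ∈ Submodule.span ℤ (Set.range v) := by
      intro α β hα hβ haα hbβ
      have : a • e t + b • e u = α • e t + β • e u := by
        ext k
        rw [c_add, c_add, c_rsmul, c_rsmul, c_zsmul, c_zsmul, haα, hbβ]
      rw [this]
      apply pair_mem
      rcases hα with rfl | rfl <;> rcases hβ with rfl | rfl <;> decide
    rcases ha with rfl | rfl <;> rcases hb with rfl | rfl
    · exact key 1 1 (Or.inl rfl) (Or.inl rfl) (by norm_num) (by norm_num)
    · exact key 1 (-1) (Or.inl rfl) (Or.inr rfl) (by norm_num) (by norm_num)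
    · exact key (-1) 1 (Or.inr rfl) (Or.inl rfl) (by norm_num) (by norm_num)
    · exact key (-1) (-1) (Or.inr rfl) (Or.inr rfl) (by norm_num) (by norm_num)
  · set m : Fin 8 → ℤ :=
      fun i => (if ε i = -1 then -1 else 0) + (if i = (7 : Fin 8) then 1 else 0) with hmdef
    have hx : (1/2 : ℝ) • ∑ i : Fin 8, ε i • e i = v 0 + ∑ i : Fin 8, m i • e i := by
      ext k
      have hl : ((1/2 : ℝ) • ∑ i : Fin 8, ε i • e i).c k = ε k / 2 := by
        rw [c_rsmul, c_sum]
        simp only [c_rsmul, c_e, mul_ite, mul_one, mul_zero]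
        rw [Finset.sum_ite_eq]
        simp; ring
      rw [hl, c_add, c_intsum, v0, c_gv]
      simp only [hmdef]
      rcases hε k with h | h <;> rw [h] <;> push_cast <;> split_ifs <;> norm_num at *
    have hev : Even (∑ i : Fin 8, m i) := by
      have h1 : (∑ i : Fin 8, m i)
          = -((Finset.univ.filter fun i => ε i = -1).card : ℤ) + 1 := by
        simp only [hmdef]
        rw [Finset.sum_add_distrib]
        have hptw : ∀ i : Fin 8, (if ε i = -1 then (-1 : ℤ) else 0) = -(if ε i = -1 then 1 else 0) := by
          intro i; split_ifs <;> ring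
        rw [Finset.sum_congr rfl fun i _ => hptw i, Finset.sum_neg_distrib, Finset.sum_boole]
        simp [Finset.sum_ite_eq']
      obtain ⟨j, hj⟩ := hodd
      rw [h1, hj]
      exact ⟨-j, by push_cast; ring⟩
    rw [hx]
    exact Submodule.add_mem _ (Submodule.subset_span ⟨0, rfl⟩) (evensum_mem m hev)

lemma span_eq : L = Submodule.span ℤ (Set.range v) :=
  le_antisymm (Submodule.span_le.2 roots_sub_span)
    (Submodule.span_mono (Set.range_subset_iff.2 v_mem_roots))

lemma v_li : LinearIndependent ℤ v := by
  rw [Fintype.linearIndependent_iff]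
  intro cf hcf
  have hc : ∀ k : Fin 8, (∑ i : Fin 8, cf i • v i).c k = 0 := fun k => by rw [hcf]; rfl
  have hk : ∀ k : Fin 8, (cf 0 : ℝ) * (if k = 7 then -(1/2:ℝ) else 1/2)
      + cf 1 * ((if k = (0:Fin 8) then (1:ℝ) else 0) + (if k = 1 then 1 else 0))
      + cf 2 * ((if k = (1:Fin 8) then (1:ℝ) else 0) - (if k = 0 then 1 else 0))
      + cf 3 * ((if k = (2:Fin 8) then (1:ℝ) else 0) - (if k = 0 then 1 else 0))
      + cf 4 * ((if k = (3:Fin 8) then (1:ℝ) else 0) - (if k = 0 then 1 else 0))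
      + cf 5 * ((if k = (4:Fin 8) then (1:ℝ) else 0) - (if k = 0 then 1 else 0))
      + cf 6 * ((if k = (5:Fin 8) then (1:ℝ) else 0) - (if k = 0 then 1 else 0))
      + cf 7 * ((if k = (6:Fin 8) then (1:ℝ) else 0) - (if k = 0 then 1 else 0)) = 0 := by
    intro k
    have := hc k
    rw [Fin.sum_univ_eight] at this
    simp only [c_add, c_zsmul, v0, v1, v2, v3, v4, v5, v6, v7, c_gv, c_sub, c_e] at this
    linarith [this]
  have h7 := hk 7; have h0 := hk 0; have h1 := hk 1; have h2 := hk 2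
  have h3 := hk 3; have h4 := hk 4; have h5 := hk 5; have h6 := hk 6
  simp +decide at h0 h1 h2 h3 h4 h5 h6 h7
  intro i
  have hc0 : (cf 0 : ℝ) = 0 := by exact_mod_cast h7
  have hc3 : (cf 3 : ℝ) = 0 := by linarith
  have hc4 : (cf 4 : ℝ) = 0 := by linarith
  have hc5 : (cf 5 : ℝ) = 0 := by linarith
  have hc6 : (cf 6 : ℝ) = 0 := by linarith
  have hc7 : (cf 7 : ℝ) = 0 := by linarith
  have hc1 : (cf 1 : ℝ) = 0 := by linarith
  have hc2 : (cf 2 : ℝ) = 0 := by linarith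
  fin_cases i
  exacts [h7, by exact_mod_cast hc1, by exact_mod_cast hc2, by exact_mod_cast hc3,
    by exact_mod_cast hc4, by exact_mod_cast hc5, by exact_mod_cast hc6, by exact_mod_cast hc7]

end Oct
end LeechPaper
namespace LeechPaper
namespace Oct

lemma sum_sq_eight (m : Fin 8 → ℤ) (hpar : ∀ k, m k % 2 = m 0 % 2)
    (hsum : (∑ k : Fin 8, m k) % 4 = (2 * m 0) % 4) :
    ∃ t : ℕ, ∑ k : Fin 8, (m k) ^ 2 = 8 * t := by
  have hnn : 0 ≤ ∑ k : Fin 8, (m k) ^ 2 := Finset.sum_nonneg fun k _ => sq_nonneg _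
  suffices h : (∑ k : Fin 8, (m k) ^ 2) % 8 = 0 by
    refine ⟨((∑ k : Fin 8, (m k) ^ 2) / 8).toNat, ?_⟩
    omega
  rcases Int.emod_two_eq (m 0) with h0 | h0
  · -- all even
    have he : ∀ k, m k % 2 = 0 := fun k => by rw [hpar k, h0]
    have hmk : ∀ k, m k = 2 * (m k / 2) := fun k => by have := he k; omega
    have h1 : ∑ k : Fin 8, (m k) ^ 2 = 4 * ∑ k : Fin 8, (m k / 2) ^ 2 := by
      rw [Finset.mul_sum]
      refine Finset.sum_congr rfl fun k _ => ?_
      conv_lhs => rw [hmk k]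
      ring
    have h2 : ∑ k : Fin 8, m k = 2 * ∑ k : Fin 8, (m k / 2) := by
      rw [Finset.mul_sum]
      refine Finset.sum_congr rfl fun k _ => ?_
      conv_lhs => rw [hmk k]
    have h3 : (∑ k : Fin 8, (m k / 2)) % 2 = 0 := by
      have hm0 : m 0 = 2 * (m 0 / 2) := hmk 0
      omega
    have h4 : (∑ k : Fin 8, (m k / 2) ^ 2) % 2 = (∑ k : Fin 8, (m k / 2)) % 2 := by
      rw [Finset.sum_int_mod, Finset.sum_int_mod _ _ fun k => m k / 2]
      congr 1
      refine Finset.sum_congr rfl fun k _ => ?_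
      rcases Int.emod_two_eq (m k / 2) with h | h <;> rw [pow_two, Int.mul_emod, h] <;> rfl
    omega
  · -- all odd
    have hsq : ∀ k, (m k) ^ 2 % 8 = 1 := by
      intro k
      have h := hpar k
      rw [h0] at h
      have h8 : m k % 8 = 1 ∨ m k % 8 = 3 ∨ m k % 8 = 5 ∨ m k % 8 = 7 := by omega
      rcases h8 with h | h | h | h <;> rw [pow_two, Int.mul_emod, h] <;> rfl
    have n0 := fun k => sq_nonneg (m k)
    have g0 := hsq 0; have g1 := hsq 1; have g2 := hsq 2; have g3 := hsq 3
    have g4 := hsq 4; have g5 := hsq 5; have g6 := hsq 6; have g7 := hsq 7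
    rw [Fin.sum_univ_eight]
    simp only [pow_two] at *
    omega

/-- invariant characterizing (a superset of) the lattice -/
def Q (x : Oct) : Prop :=
  ∃ m : Fin 8 → ℤ, (∀ k, x.c k = (m k : ℝ) / 2) ∧ (∀ k, m k % 2 = m 0 % 2) ∧
    (∑ k : Fin 8, m k) % 4 = (2 * m 0) % 4

lemma Q_roots : ∀ x ∈ Roots, Q x := by
  rintro x (⟨t, u, htu, a, b, ha, hb, rfl⟩ | ⟨ε, hε, hodd, rfl⟩)
  · refine ⟨fun i => (if i = t then 2 * (if a = 1 then 1 else -1) else 0)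
      + (if i = u then 2 * (if b = 1 then 1 else -1) else 0), fun k => ?_, fun k => ?_, ?_⟩
    · rw [c_add, c_rsmul, c_rsmul, c_e, c_e]
      have ha' : a = (if a = 1 then (1:ℝ) else -1) := by
        rcases ha with h | h <;> rw [h] <;> norm_num
      have hb' : b = (if b = 1 then (1:ℝ) else -1) := by
        rcases hb with h | h <;> rw [h] <;> norm_num
      push_cast
      rcases ha with h | h <;> rcases hb with h' | h' <;>
        rw [h, h'] <;> split_ifs <;> norm_num at *
    · have hev : ∀ j : Fin 8, ((if j = t then 2 * (if a = 1 then (1:ℤ) else -1) else 0)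
          + (if j = u then 2 * (if b = 1 then 1 else -1) else 0)) % 2 = 0 := by
        intro j; split_ifs <;> omega
      rw [hev k, hev 0]
    · have hs : (∑ i : Fin 8, ((if i = t then 2 * (if a = 1 then (1:ℤ) else -1) else 0)
          + (if i = u then 2 * (if b = 1 then 1 else -1) else 0)))
          = 2 * (if a = 1 then 1 else -1) + 2 * (if b = 1 then 1 else -1) := by
        rw [Finset.sum_add_distrib]
        simp [Finset.sum_ite_eq']
      rw [hs]
      simp only []
      split_ifs <;> omega
  · refine ⟨fun i => if ε i = -1 then -1 else 1, fun k => ?_, fun k => ?_, ?_⟩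
    · have hl : ((1/2 : ℝ) • ∑ i : Fin 8, ε i • e i).c k = ε k / 2 := by
        rw [c_rsmul, c_sum]
        simp only [c_rsmul, c_e, mul_ite, mul_one, mul_zero]
        rw [Finset.sum_ite_eq]
        simp; ring
      rw [hl]
      simp only []
      rcases hε k with h | h <;> rw [h] <;> push_cast <;> split_ifs <;> norm_num at *
    · simp only []
      rcases hε k with h | h <;> rcases hε 0 with h' | h' <;>
        rw [h, h'] <;> split_ifs <;> norm_num at *
    · have h1 : (∑ i : Fin 8, if ε i = -1 then (-1:ℤ) else 1)
          = 8 - 2 * ((Finset.univ.filter fun i => ε i = -1).card : ℤ) := by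
        have hptw : ∀ i : Fin 8, (if ε i = -1 then (-1:ℤ) else 1)
            = 1 - 2 * (if ε i = -1 then 1 else 0) := by
          intro i; split_ifs <;> ring
        rw [Finset.sum_congr rfl fun i _ => hptw i, Finset.sum_sub_distrib]
        rw [← Finset.mul_sum, Finset.sum_boole]
        simp
      obtain ⟨j, hj⟩ := hodd
      rw [h1, hj]
      simp only []
      rcases hε 0 with h' | h' <;> rw [h'] <;> split_ifs <;> push_cast <;> omega
  
lemma Q_L : ∀ x ∈ L, Q x := by
  intro x hx
  induction hx using Submodule.span_induction with
  | mem x h => exact Q_roots x h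
  | zero => exact ⟨0, fun k => by simp [c_zero], fun k => rfl, rfl⟩
  | add x y hx hy qx qy =>
    obtain ⟨m, hm1, hm2, hm3⟩ := qx
    obtain ⟨n, hn1, hn2, hn3⟩ := qy
    refine ⟨fun k => m k + n k, fun k => ?_, fun k => ?_, ?_⟩
    · rw [c_add, hm1, hn1]; push_cast; ring
    · simp only []; have := hm2 k; have := hn2 k; omega
    · simp only []; rw [Finset.sum_add_distrib]; omega
  | smul z x hx qx =>
    obtain ⟨m, hm1, hm2, hm3⟩ := qx
    refine ⟨fun k => z * m k, fun k => ?_, fun k => ?_, ?_⟩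
    · rw [c_zsmul, hm1]; push_cast; ring
    · simp only []; rw [Int.mul_emod, hm2 k, ← Int.mul_emod]
    · simp only []; rw [← Finset.mul_sum, Int.mul_emod, hm3, ← Int.mul_emod]
      ring_nf

lemma eta_L_even : ∀ x ∈ L, ∃ n : ℕ, eta x = 2 * n := by
  intro x hx
  obtain ⟨m, hm1, hm2, hm3⟩ := Q_L x hx
  obtain ⟨t, ht⟩ := sum_sq_eight m hm2 hm3
  refine ⟨t, ?_⟩
  rw [eta_eq]
  have : ∀ k : Fin 8, x.c k ^ 2 = ((m k : ℝ)) ^ 2 / 4 := by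
    intro k; rw [hm1]; ring
  rw [Finset.sum_congr rfl fun k _ => this k, ← Finset.sum_div]
  have : (∑ k : Fin 8, ((m k : ℝ)) ^ 2) = ((∑ k : Fin 8, (m k) ^ 2 : ℤ) : ℝ) := by push_cast; rfl
  rw [this, ht]
  push_cast
  ring

end Oct
end LeechPaper

namespace LeechPaper
open Oct

/-- Each of the 240 root octonions (the 112 octonions `±e_t ± e_u` for distinct
`t, u` and the 128 octonions `½(±1 ± e₁ ± ⋯ ± e₇)` with an odd number of minus
signs) has norm `η = 2`; moreover their ℤ-span `L` is a free ℤ-module of rank 8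
inside 𝕆 on which `η` takes even non-negative integer values. -/
theorem roots_norm_two_and_span_even_rank_eight :
    (∀ r ∈ Roots, eta r = 2) ∧
    Module.Free ℤ L ∧
    Module.finrank ℤ L = 8 ∧
    (∀ x ∈ L, ∃ n : ℕ, eta x = 2 * n) := by
  have B : Module.Basis (Fin 8) ℤ L := (Module.Basis.span v_li).map (LinearEquiv.ofEq _ _ span_eq.symm)
  refine ⟨?_, Module.Free.of_basis B, ?_, eta_L_even⟩
  · rintro r (⟨t, u, htu, a, b, ha, hb, rfl⟩ | ⟨ε, hε, hodd, rfl⟩)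
    · exact eta_root1 htu ha hb
    · exact eta_root2 ε hε
  · rw [Module.finrank_eq_card_basis B, Fintype.card_fin]

end LeechPaper
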